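/- Let f(x) = a_{n_r}x^{n_r} + ... + a_{n_1}x^{n_1} + a_0 ∈ Z[x] with all coefficients nonzero and |a_0| = |a_{n_1}| + ... + |a_{n_r}|. Then every root of unity that is a root of f is a simple root of f; that is, f and f' have no common root of unity. -/

import Mathlib

open Polynomial

theorem stmt_16 (r : ℕ) (n : Fin (r + 1) → ℕ) (a : Fin (r + 1) → ℤ) (a0 : ℤ)
    (hmono : StrictMono n) (hpos : 0 < n 0) (ha0 : a0 ≠ 0) (ha : ∀ i, a i ≠ 0)
    (heq : |a0| = ∑ i, |a i|)
    (f : ℤ[X]) (hf : f = C a0 + ∑ i, C (a i) * X ^ (n i))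
    (ζ : ℂ) (hζ : ∃ k : ℕ, 0 < k ∧ ζ ^ k = 1) (hroot : aeval ζ f = 0) :
    aeval ζ (derivative f) ≠ 0 := by
  obtain ⟨k, hk, hζk⟩ := hζ
  have habs : ‖ζ‖ = 1 := Complex.norm_eq_one_of_pow_eq_one hζk hk.ne'
  have hζ0 : ζ ≠ 0 := by
    intro h; rw [h] at habs; simp at habs
  have hnpos : ∀ i, 0 < n i := fun i => lt_of_lt_of_le hpos (hmono.monotone (Fin.zero_le i))
  -- the root equation
  have hS : ∑ i, (a i : ℂ) * ζ ^ (n i) = -(a0 : ℂ) := by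
    rw [hf] at hroot
    simp only [map_add, map_sum, map_mul, aeval_C, aeval_X, map_pow, map_intCast,
      algebraMap_int_eq, eq_intCast] at hroot
    linear_combination hroot
  -- the sign unit
  have hsign : (Int.sign a0 : ℝ) = 1 ∨ (Int.sign a0 : ℝ) = -1 := by
    rcases lt_or_gt_of_ne ha0 with h | h
    · right; rw [Int.sign_eq_neg_one_of_neg h]; norm_num
    · left; rw [Int.sign_eq_one_of_pos h]; norm_num
  set ε : ℝ := -(Int.sign a0 : ℝ) with hε
  have hε1 : |ε| = 1 := by rcases hsign with h | h <;> simp [hε, h]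
  have hεa0 : ε * (-(a0 : ℝ)) = ((|a0| : ℤ) : ℝ) := by
    rcases lt_or_gt_of_ne ha0 with h | h
    · rw [hε, Int.sign_eq_neg_one_of_neg h, abs_of_neg h]; push_cast; ring
    · rw [hε, Int.sign_eq_one_of_pos h, abs_of_pos h]; push_cast; ring
  -- termwise equality in the triangle inequality
  have hterm : ∀ i, (ε : ℂ) * ((a i : ℂ) * ζ ^ (n i)) = ((|a i| : ℤ) : ℂ) := by
    have habsw : ∀ i, ‖(ε : ℂ) * ((a i : ℂ) * ζ ^ (n i))‖ = ((|a i| : ℤ) : ℝ) := by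
      intro i
      rw [norm_mul, norm_mul, norm_pow, habs, one_pow, mul_one, Complex.norm_real, Real.norm_eq_abs, hε1,
        one_mul, Complex.norm_intCast, Int.cast_abs]
    have hle : ∀ i ∈ Finset.univ, ((ε : ℂ) * ((a i : ℂ) * ζ ^ (n i))).re ≤ ((|a i| : ℤ) : ℝ) := by
      intro i _
      calc ((ε : ℂ) * ((a i : ℂ) * ζ ^ (n i))).re
          ≤ ‖(ε : ℂ) * ((a i : ℂ) * ζ ^ (n i))‖ := Complex.re_le_norm _
        _ = ((|a i| : ℤ) : ℝ) := habsw i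
    have hsum : ∑ i, ((ε : ℂ) * ((a i : ℂ) * ζ ^ (n i))).re = ∑ i, ((|a i| : ℤ) : ℝ) := by
      have h1 : (∑ i, (ε : ℂ) * ((a i : ℂ) * ζ ^ (n i))) = (ε : ℂ) * (-(a0 : ℂ)) := by
        rw [← Finset.mul_sum, hS]
      have h2 : (∑ i, ((ε : ℂ) * ((a i : ℂ) * ζ ^ (n i))).re)
          = ((ε : ℂ) * (-(a0 : ℂ))).re := by
        rw [← Complex.re_sum, h1]
      rw [h2]
      have h3 : ((ε : ℂ) * (-(a0 : ℂ))) = ((ε * (-(a0:ℝ)) : ℝ) : ℂ) := by push_cast; ring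
      rw [h3, Complex.ofReal_re, hεa0]
      exact_mod_cast heq
    have hpt := (Finset.sum_eq_sum_iff_of_le hle).mp hsum
    intro i
    have hre : ((ε : ℂ) * ((a i : ℂ) * ζ ^ (n i))).re = ((|a i| : ℤ) : ℝ) :=
      hpt i (Finset.mem_univ i)
    set w : ℂ := (ε : ℂ) * ((a i : ℂ) * ζ ^ (n i)) with hw
    have him : w.im = 0 := by
      have h1 : w.re ^ 2 + w.im ^ 2 = ‖w‖ ^ 2 := by
        rw [Complex.sq_norm, Complex.normSq_apply]; ring
      rw [habsw i, hre] at h1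
      nlinarith [sq_nonneg w.im]
    have : w = (((|a i| : ℤ) : ℝ) : ℂ) := by
      apply Complex.ext
      · simpa using hre
      · simpa using him
    rw [this]; norm_cast
  -- the derivative value
  have hder : ζ * aeval ζ (derivative f) = ∑ i, (n i : ℂ) * ((a i : ℂ) * ζ ^ (n i)) := by
    have hd : derivative f = ∑ i, C (a i) * (C ((n i : ℤ)) * X ^ (n i - 1)) := by
      rw [hf, derivative_add, derivative_C, derivative_sum, zero_add]
      apply Finset.sum_congr rfl
      intro i _
      rw [derivative_C_mul, derivative_X_pow]
    rw [hd]
    simp only [map_sum, map_mul, aeval_C, map_pow, aeval_X, map_intCast, map_natCast, algebraMap_int_eq, eq_intCast,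
      Int.cast_natCast, Finset.mul_sum]
    apply Finset.sum_congr rfl
    intro i _
    have hpow : ζ * ζ ^ (n i - 1) = ζ ^ (n i) := by
      rw [← pow_succ', Nat.sub_add_cancel (hnpos i)]
    calc ζ * ((a i : ℂ) * ((n i : ℂ) * ζ ^ (n i - 1)))
        = (n i : ℂ) * ((a i : ℂ) * (ζ * ζ ^ (n i - 1))) := by ring
      _ = (n i : ℂ) * ((a i : ℂ) * ζ ^ (n i)) := by rw [hpow]
  have hval : (ε : ℂ) * (ζ * aeval ζ (derivative f)) = ∑ i, (n i : ℂ) * ((|a i| : ℤ) : ℂ) := by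
    rw [hder, Finset.mul_sum]
    apply Finset.sum_congr rfl
    intro i _
    rw [show (ε : ℂ) * ((n i : ℂ) * ((a i : ℂ) * ζ ^ (n i)))
        = (n i : ℂ) * ((ε : ℂ) * ((a i : ℂ) * ζ ^ (n i))) by ring, hterm i]
  have hsumpos : (0 : ℂ) ≠ ∑ i, (n i : ℂ) * ((|a i| : ℤ) : ℂ) := by
    have hpos' : (0 : ℝ) < ∑ i, (n i : ℝ) * ((|a i| : ℤ) : ℝ) := by
      apply Finset.sum_pos
      · intro i _
        have h1 : (0:ℝ) < (n i : ℝ) := by exact_mod_cast hnpos i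
        have h2 : (0:ℝ) < ((|a i| : ℤ) : ℝ) := by
          exact_mod_cast abs_pos.mpr (ha i)
        positivity
      · exact Finset.univ_nonempty
    intro h
    have h2 := congrArg Complex.re h
    rw [Complex.re_sum] at h2
    simp only [Complex.mul_re, Complex.natCast_re, Complex.intCast_re, Complex.natCast_im,
      Complex.intCast_im, mul_zero, zero_mul, sub_zero, Complex.zero_re] at h2
    linarith
  intro hcon
  rw [hcon, mul_zero, mul_zero] at hval
  exact hsumpos hval
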